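/- (Theorem 2.5) For all natural numbers m, n, real numbers x, y, 0 < q < 1, h ∈ ℤ, r ≥ 1: \sum_{k=0}^m \binom{m}{k} q^{(n+k)x} E_{n+k,q}^{(h,r)}(y) [x]_q^{m-k} = \sum_{k=0}^n \binom{n}{k} E_{m+k,q}^{(h,r)}(x+y) \, q^{(n-k)x} [-x]_q^{n-k}. -/
import Mathlib


noncomputable def qnum (q x : ℝ) : ℝ := (1 - q ^ x) / (1 - q)

/-- The (h,q)-extension of higher-order Euler polynomials, by the finite closed formula. -/
noncomputable def qE (q : ℝ) (h : ℤ) (r n : ℕ) (x : ℝ) : ℝ :=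
  (1 + q) ^ r / (1 - q) ^ n *
    ∑ l ∈ Finset.range (n + 1), (n.choose l : ℝ) * (-(q ^ x)) ^ l /
      ∏ j ∈ Finset.range r, (1 + q ^ (h - r + l + 1 + j))

open Polynomial in
lemma coeff_helper (c e : ℝ) (N l : ℕ) :
    ((C c * (1 - C e * X)) ^ N).coeff l = c ^ N * ((N.choose l : ℝ) * (-e) ^ l) := by
  have h1 : (1 - C e * X : ℝ[X]) = C (-e) * X + 1 := by
    rw [map_neg]; ring
  rw [mul_pow, ← C_pow, coeff_C_mul, h1, add_pow]
  simp only [one_pow, mul_one, mul_pow, ← C_pow, finset_sum_coeff]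
  have hterm : ∀ b, (C ((-e)^b) * X ^ b * (N.choose b : ℝ[X])).coeff l
      = (if b = l then ((N.choose b : ℝ) * (-e) ^ l) else 0) := by
    intro b
    rw [← C_eq_natCast, mul_right_comm, ← map_mul, coeff_C_mul, coeff_X_pow]
    by_cases hb : b = l
    · subst hb; simp [mul_comm]
    · rw [if_neg (fun hc => hb hc.symm), if_neg hb, mul_zero]
  rw [Finset.sum_congr rfl fun b _ => hterm b, Finset.sum_ite_eq']
  by_cases hl : l ∈ Finset.range (N+1)
  · simp [hl]
  · rw [if_neg hl, Nat.choose_eq_zero_of_lt (by simpa using hl)]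
    simp

open Polynomial in
lemma expand_coeff (c e Z : ℝ) (n m l : ℕ) :
    ((C c * (1 - C e * X)) ^ n * ((C c * (1 - C e * X)) + C Z) ^ m).coeff l
      = ∑ k ∈ Finset.range (m+1),
          (m.choose k : ℝ) * (c^(n+k) * (((n+k).choose l : ℝ) * (-e)^l)) * Z^(m-k) := by
  rw [add_pow, Finset.mul_sum, finset_sum_coeff]
  refine Finset.sum_congr rfl fun k hk => ?_
  have h2 : (C c * (1 - C e * X)) ^ n
        * ((C c * (1 - C e * X)) ^ k * (C Z) ^ (m-k) * ((m.choose k : ℕ) : ℝ[X]))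
      = C ((m.choose k : ℝ) * Z ^ (m-k)) * (C c * (1 - C e * X)) ^ (n+k) := by
    rw [← C_eq_natCast, ← C_pow, map_mul, pow_add]; ring
  rw [h2, coeff_C_mul, coeff_helper]; ring

open Polynomial in
lemma core_lemma (α β D Z : ℝ) (hZ : Z = D * (1 - α)) (l m n : ℕ) :
    ∑ k ∈ Finset.range (m+1),
        (m.choose k : ℝ) * ((α*D)^(n+k) * (((n+k).choose l : ℝ) * (-β)^l)) * Z^(m-k)
  = ∑ k ∈ Finset.range (n+1),
        (n.choose k : ℝ) * (D^(m+k) * (((m+k).choose l : ℝ) * (-(α*β))^l)) * (-Z)^(n-k) := by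
  have hP : (C (α*D) * (1 - C β * X) : ℝ[X]) + C Z
      = C D * (1 - C (α*β) * X) := by
    rw [hZ]
    simp only [map_mul, map_sub, map_one]
    ring
  have hQ : (C D * (1 - C (α*β) * X) : ℝ[X]) + C (-Z)
      = C (α*D) * (1 - C β * X) := by
    rw [map_neg, ← hP]; ring
  rw [← expand_coeff, ← expand_coeff, hP, hQ, mul_comm]

noncomputable def gAux (q : ℝ) (h : ℤ) (r : ℕ) (l : ℕ) : ℝ :=
  (1 + q) ^ r / ∏ j ∈ Finset.range r, (1 + q ^ (h - r + l + 1 + j))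

lemma qE_eq (q : ℝ) (h : ℤ) (r N : ℕ) (z : ℝ) :
    qE q h r N z = ∑ l ∈ Finset.range (N+1),
      gAux q h r l * (((1-q)⁻¹) ^ N * ((N.choose l : ℝ) * (-(q ^ z)) ^ l)) := by
  rw [qE, Finset.mul_sum]
  refine Finset.sum_congr rfl fun l _ => ?_
  rw [gAux, div_eq_mul_inv, div_eq_mul_inv, div_eq_mul_inv, ← inv_pow]
  ring

lemma qE_eq' (q : ℝ) (h : ℤ) (r N M : ℕ) (hNM : N + 1 ≤ M) (z : ℝ) :
    qE q h r N z = ∑ l ∈ Finset.range M,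
      gAux q h r l * (((1-q)⁻¹) ^ N * ((N.choose l : ℝ) * (-(q ^ z)) ^ l)) := by
  rw [qE_eq]
  refine Finset.sum_subset (Finset.range_subset_range.2 hNM) fun l hl hnl => ?_
  rw [Nat.choose_eq_zero_of_lt (by simpa using hnl)]
  simp

theorem qE_double_symmetry (q : ℝ) (hq0 : 0 < q) (hq1 : q < 1) (h : ℤ) (r : ℕ) (hr : 0 < r)
    (m n : ℕ) (x y : ℝ) :
    ∑ k ∈ Finset.range (m + 1),
        (m.choose k : ℝ) * q ^ (((n + k : ℕ) : ℝ) * x) * qE q h r (n + k) y *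
          (qnum q x) ^ (m - k) =
      ∑ k ∈ Finset.range (n + 1),
        (n.choose k : ℝ) * qE q h r (m + k) (x + y) * q ^ (((n - k : ℕ) : ℝ) * x) *
          (qnum q (-x)) ^ (n - k) := by
  set α := q ^ x with hα_def
  set β := q ^ y with hβ_def
  set D := (1 - q)⁻¹ with hD_def
  set Z := qnum q x with hZ_def
  have h1q : (1 : ℝ) - q ≠ 0 := sub_ne_zero.2 (ne_of_gt (by linarith))
  have hα0 : α ≠ 0 := (Real.rpow_pos_of_pos hq0 x).ne'
  have hZ : Z = D * (1 - α) := by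
    rw [hZ_def, qnum, div_eq_inv_mul]
  have hpow : ∀ N : ℕ, q ^ ((N : ℝ) * x) = α ^ N := fun N => by
    rw [mul_comm, Real.rpow_mul hq0.le, Real.rpow_natCast]
  have hxy : q ^ (x + y) = α * β := Real.rpow_add hq0 x y
  have hneg : α * qnum q (-x) = -Z := by
    rw [qnum, Real.rpow_neg hq0.le, hZ, ← hα_def, mul_div_assoc']
    have hh : α * (1 - α⁻¹) = α - 1 := by field_simp
    rw [hh, div_eq_inv_mul, hD_def]
    ring
  set M := m + n + 2 with hM_def
  calc
    ∑ k ∈ Finset.range (m + 1),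
        (m.choose k : ℝ) * q ^ (((n + k : ℕ) : ℝ) * x) * qE q h r (n + k) y *
          Z ^ (m - k)
      = ∑ k ∈ Finset.range (m + 1), ∑ l ∈ Finset.range M,
          gAux q h r l *
            ((m.choose k : ℝ) * ((α*D)^(n+k) * (((n+k).choose l : ℝ) * (-β)^l)) * Z^(m-k)) := by
        refine Finset.sum_congr rfl fun k hk => ?_
        rw [qE_eq' q h r (n+k) M (by have := Finset.mem_range.1 hk; omega) y, hpow (n+k), Finset.mul_sum, Finset.sum_mul]
        refine Finset.sum_congr rfl fun l hl => ?_
        rw [mul_pow]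
        ring
    _ = ∑ l ∈ Finset.range M, gAux q h r l *
          ∑ k ∈ Finset.range (m + 1),
            (m.choose k : ℝ) * ((α*D)^(n+k) * (((n+k).choose l : ℝ) * (-β)^l)) * Z^(m-k) := by
        rw [Finset.sum_comm]
        exact Finset.sum_congr rfl fun l _ => (Finset.mul_sum _ _ _).symm
    _ = ∑ l ∈ Finset.range M, gAux q h r l *
          ∑ k ∈ Finset.range (n + 1),
            (n.choose k : ℝ) * (D^(m+k) * (((m+k).choose l : ℝ) * (-(α*β))^l)) * (-Z)^(n-k) := by
        refine Finset.sum_congr rfl fun l _ => ?_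
        rw [core_lemma α β D Z hZ l m n]
    _ = ∑ k ∈ Finset.range (n + 1), ∑ l ∈ Finset.range M,
          gAux q h r l *
            ((n.choose k : ℝ) * (D^(m+k) * (((m+k).choose l : ℝ) * (-(α*β))^l)) * (-Z)^(n-k)) := by
        rw [Finset.sum_comm]
        exact Finset.sum_congr rfl fun l _ => Finset.mul_sum _ _ _
    _ = _ := by
        refine Finset.sum_congr rfl fun k hk => ?_
        rw [qE_eq' q h r (m+k) M (by have := Finset.mem_range.1 hk; omega) (x+y), hxy, hpow (n-k), Finset.mul_sum,
          Finset.sum_mul, Finset.sum_mul]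
        refine Finset.sum_congr rfl fun l hl => ?_
        have : α ^ (n-k) * qnum q (-x) ^ (n-k) = (-Z)^(n-k) := by
          rw [← mul_pow, hneg]
        rw [← this]
        ring
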